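/- (Scaling solution of the time-dependent harmonic Schrödinger equation.) Let m > 0, ω₀ > 0, E ∈ ℝ, and let ω : ℝ → ℝ be continuous. Let φ : ℝ → ℂ be twice differentiable and satisfy the stationary Schrödinger equation −(1/(2m))·φ''(z) + (m ω₀² z²/2)·φ(z) = E·φ(z) for all z ∈ ℝ. Let b : ℝ → ℝ be twice differentiable, strictly positive, and satisfy b''(t) + ω(t)²·b(t) = ω₀²/b(t)³, and set τ(t) = ∫_0^t ds / b(s)². Define Φ(z,t) = b(t)^{−1/2} · φ(z / b(t)) · exp( i·m·z²·b'(t) / (2 b(t)) − i·E·τ(t) ). Then Φ solves the time-dependent Schrödinger equation: i·∂Φ/∂t (z,t) = −(1/(2m))·∂²Φ/∂z² (z,t) + (m ω(t)² z²/2)·Φ(z,t) for all z, t ∈ ℝ (with ħ = 1). -/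

import Mathlib

open Complex

set_option maxHeartbeats 1600000 in
/-- Scaling solution of the time-dependent harmonic Schrödinger equation: if `φ` is a
stationary state of the harmonic oscillator with frequency `ω₀` and energy `E`, and `b`
solves the Ermakov–Pinney equation `b'' + ω(t)² b = ω₀²/b³` with `b > 0`, then
`Φ(z,t) = b(t)^{−1/2} φ(z/b(t)) exp(i m z² b'(t)/(2b(t)) − i E τ(t))`, with
`τ(t) = ∫_0^t ds/b(s)²`, solves `i ∂Φ/∂t = −(1/2m) ∂²Φ/∂z² + (m ω(t)² z²/2) Φ`. -/
theorem scaling_solution_time_dependent_harmonic_oscillator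
    (m ω₀ : ℝ) (hm : 0 < m) (hω₀ : 0 < ω₀) (E : ℝ)
    (ω : ℝ → ℝ) (hω : Continuous ω)
    (φ φ' φ'' : ℝ → ℂ)
    (hφ' : ∀ z, HasDerivAt φ (φ' z) z)
    (hφ'' : ∀ z, HasDerivAt φ' (φ'' z) z)
    (hφeq : ∀ z : ℝ, -(1 / (2 * (m : ℂ))) * φ'' z + ((m * ω₀ ^ 2 * z ^ 2 / 2 : ℝ) : ℂ) * φ z
      = (E : ℂ) * φ z)
    (b b' b'' : ℝ → ℝ) (hbpos : ∀ t, 0 < b t)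
    (hb' : ∀ t, HasDerivAt b (b' t) t)
    (hb'' : ∀ t, HasDerivAt b' (b'' t) t)
    (hbeq : ∀ t, b'' t + (ω t) ^ 2 * b t = ω₀ ^ 2 / (b t) ^ 3)
    (τ : ℝ → ℝ) (hτ : τ = fun t => ∫ s in (0 : ℝ)..t, 1 / (b s) ^ 2)
    (Φ : ℝ → ℝ → ℂ)
    (hΦ : Φ = fun z t => ((1 / Real.sqrt (b t) : ℝ) : ℂ) * φ (z / b t) *
        Complex.exp (Complex.I * (m : ℂ) * (z : ℂ) ^ 2 * (b' t : ℂ) / (2 * (b t : ℂ))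
          - Complex.I * (E : ℂ) * (τ t : ℂ))) :
    ∃ Φt Φz Φzz : ℝ → ℝ → ℂ,
      (∀ z t, HasDerivAt (fun s => Φ z s) (Φt z t) t) ∧
      (∀ z t, HasDerivAt (fun w => Φ w t) (Φz z t) z) ∧
      (∀ z t, HasDerivAt (fun w => Φz w t) (Φzz z t) z) ∧
      (∀ z t, Complex.I * Φt z t
        = -(1 / (2 * (m : ℂ))) * Φzz z t + ((m * (ω t) ^ 2 * z ^ 2 / 2 : ℝ) : ℂ) * Φ z t) := by
  have hm0 : (m : ℂ) ≠ 0 := Complex.ofReal_ne_zero.mpr hm.ne'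
  have hb0 : ∀ t, b t ≠ 0 := fun t => (hbpos t).ne'
  have hB0 : ∀ t, ((b t : ℝ) : ℂ) ≠ 0 := fun t => Complex.ofReal_ne_zero.mpr (hb0 t)
  have hs0 : ∀ t, Real.sqrt (b t) ≠ 0 := fun t => Real.sqrt_ne_zero'.mpr (hbpos t)
  have hS0 : ∀ t, ((Real.sqrt (b t) : ℝ) : ℂ) ≠ 0 := fun t => Complex.ofReal_ne_zero.mpr (hs0 t)
  have hbd : Differentiable ℝ b := fun t => (hb' t).differentiableAt
  have hbC : Continuous b := hbd.continuous
  have hcont : Continuous fun s => 1 / (b s) ^ 2 :=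
    continuous_const.div (hbC.pow 2) fun s => pow_ne_zero 2 (hb0 s)
  have hτ' : ∀ t, HasDerivAt τ (1 / (b t) ^ 2) t := by
    intro t
    rw [hτ]
    exact intervalIntegral.integral_hasDerivAt_right (hcont.intervalIntegrable _ _)
      (hcont.stronglyMeasurableAtFilter _ _) hcont.continuousAt
  subst hΦ
  set X : ℝ → ℝ → ℂ := fun z t =>
    Complex.exp (Complex.I * (m : ℂ) * (z : ℂ) ^ 2 * (b' t : ℂ) / (2 * (b t : ℂ))
      - Complex.I * (E : ℂ) * (τ t : ℂ)) with hX
  -- derivative of the real→complex coercion of the identity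
  have hid : ∀ z : ℝ, HasDerivAt (fun w : ℝ => ((w : ℝ) : ℂ)) 1 z := by
    intro z
    simpa using (hasDerivAt_id z).ofReal_comp
  -- derivative of X in z
  have hXz : ∀ z t, HasDerivAt (fun w => X w t)
      (X z t * (Complex.I * (m : ℂ) * (z : ℂ) * (b' t : ℂ) / (b t : ℂ))) z := by
    intro z t
    have h2 : HasDerivAt (fun w : ℝ => ((w : ℝ) : ℂ) ^ 2) (2 * (z : ℂ)) z := by
      simpa [pow_two, two_mul] using (hid z).fun_mul (hid z)
    have h3 : HasDerivAt (fun w : ℝ =>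
        Complex.I * (m : ℂ) * ((w : ℝ) : ℂ) ^ 2 * (b' t : ℂ) / (2 * (b t : ℂ))
          - Complex.I * (E : ℂ) * (τ t : ℂ))
        (Complex.I * (m : ℂ) * (2 * (z : ℂ)) * (b' t : ℂ) / (2 * (b t : ℂ))) z :=
      (((h2.const_mul (Complex.I * (m : ℂ))).mul_const _).div_const _).sub_const _
    rw [hX]
    convert h3.cexp using 1
    field_simp
  -- derivative of X in t
  have hXt : ∀ z t, HasDerivAt (fun s => X z s)
      (X z t * (Complex.I * (m : ℂ) * (z : ℂ) ^ 2 *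
          ((b'' t : ℂ) * (b t : ℂ) - (b' t : ℂ) ^ 2) / (2 * (b t : ℂ) ^ 2)
        - Complex.I * (E : ℂ) / (b t : ℂ) ^ 2)) t := by
    intro z t
    have hN : HasDerivAt (fun s => Complex.I * (m : ℂ) * (z : ℂ) ^ 2 * ((b' s : ℝ) : ℂ))
        (Complex.I * (m : ℂ) * (z : ℂ) ^ 2 * ((b'' t : ℝ) : ℂ)) t :=
      ((hb'' t).ofReal_comp).const_mul _
    have hD : HasDerivAt (fun s => 2 * ((b s : ℝ) : ℂ)) (2 * ((b' t : ℝ) : ℂ)) t :=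
      ((hb' t).ofReal_comp).const_mul 2
    have hq := hN.fun_div hD (by simpa using hB0 t)
    have hτc : HasDerivAt (fun s => Complex.I * (E : ℂ) * ((τ s : ℝ) : ℂ))
        (Complex.I * (E : ℂ) * ((1 / (b t) ^ 2 : ℝ) : ℂ)) t :=
      ((hτ' t).ofReal_comp).const_mul _
    have h3 := hq.fun_sub hτc
    rw [hX]
    refine h3.cexp.congr_deriv (Eq.symm ?_)
    push_cast
    field_simp
  -- derivative of φ ∘ (·/b t) in z
  have hφz : ∀ z t, HasDerivAt (fun w => φ (w / b t))
      (φ' (z / b t) / ((b t : ℝ) : ℂ)) z := by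
    intro z t
    have h := (hφ' (z / b t)).scomp z ((hasDerivAt_id z).div_const (b t))
    refine h.congr_deriv (Eq.symm ?_)
    push_cast [Complex.real_smul]
    ring
  have hφ'z : ∀ z t, HasDerivAt (fun w => φ' (w / b t))
      (φ'' (z / b t) / ((b t : ℝ) : ℂ)) z := by
    intro z t
    have h := (hφ'' (z / b t)).scomp z ((hasDerivAt_id z).div_const (b t))
    refine h.congr_deriv (Eq.symm ?_)
    push_cast [Complex.real_smul]
    ring
  -- derivative of φ ∘ (z/b ·) in t
  have hφt : ∀ z t, HasDerivAt (fun s => φ (z / b s))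
      (((-(z * b' t) / (b t) ^ 2 : ℝ) : ℂ) * φ' (z / b t)) t := by
    intro z t
    have hin : HasDerivAt (fun s => z / b s) (-(z * b' t) / (b t) ^ 2) t := by
      have := (hasDerivAt_const t z).div (hb' t) (hb0 t)
      refine this.congr_deriv (Eq.symm ?_)
      ring
    have h := (hφ' (z / b t)).scomp t hin
    simpa [Complex.real_smul, Function.comp_def] using h
  -- derivative of the amplitude A = 1/√(b t)
  have hA : ∀ t, HasDerivAt (fun s => ((1 / Real.sqrt (b s) : ℝ) : ℂ))
      (((-(b' t) / (2 * b t * Real.sqrt (b t)) : ℝ) : ℂ)) t := by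
    intro t
    have h1 : HasDerivAt (fun s => Real.sqrt (b s)) (b' t / (2 * Real.sqrt (b t))) t :=
      (hb' t).sqrt (hb0 t)
    have h2 := (hasDerivAt_const t (1 : ℝ)).div h1 (hs0 t)
    have h3 : HasDerivAt (fun s => 1 / Real.sqrt (b s))
        (-(b' t) / (2 * b t * Real.sqrt (b t))) t := by
      refine h2.congr_deriv (Eq.symm ?_)
      rw [Real.sq_sqrt (hbpos t).le]
      field_simp
      ring
    exact h3.ofReal_comp
  refine ⟨fun z t => X z t * (((-(b' t) / (2 * b t * Real.sqrt (b t)) : ℝ) : ℂ) * φ (z / b t)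
      + ((1 / Real.sqrt (b t) : ℝ) : ℂ) * (((-(z * b' t) / (b t) ^ 2 : ℝ) : ℂ) * φ' (z / b t))
      + ((1 / Real.sqrt (b t) : ℝ) : ℂ) * φ (z / b t) *
        (Complex.I * (m : ℂ) * (z : ℂ) ^ 2 *
          ((b'' t : ℂ) * (b t : ℂ) - (b' t : ℂ) ^ 2) / (2 * (b t : ℂ) ^ 2)
        - Complex.I * (E : ℂ) / (b t : ℂ) ^ 2)),
    fun z t => ((1 / Real.sqrt (b t) : ℝ) : ℂ) * X z t *
      (φ' (z / b t) / (b t : ℂ)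
        + φ (z / b t) * (Complex.I * (m : ℂ) * (z : ℂ) * (b' t : ℂ) / (b t : ℂ))),
    fun z t => ((1 / Real.sqrt (b t) : ℝ) : ℂ) * X z t *
      (φ'' (z / b t) / (b t : ℂ) ^ 2
        + 2 * φ' (z / b t) * (Complex.I * (m : ℂ) * (z : ℂ) * (b' t : ℂ)) / (b t : ℂ) ^ 2
        + φ (z / b t) * (Complex.I * (m : ℂ) * (b' t : ℂ) / (b t : ℂ))
        + φ (z / b t) * (Complex.I * (m : ℂ) * (z : ℂ) * (b' t : ℂ) / (b t : ℂ)) ^ 2),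
    ?_, ?_, ?_, ?_⟩
  · -- t-derivative
    intro z t
    have h := (((hA t).fun_mul (hφt z t)).fun_mul (hXt z t))
    refine h.congr_deriv (Eq.symm ?_)
    push_cast
    field_simp [hB0 t, hS0 t]
  · -- z-derivative
    intro z t
    have h := (((hφz z t).const_mul (((1 / Real.sqrt (b t) : ℝ) : ℂ))).mul (hXz z t))
    refine h.congr_deriv (Eq.symm ?_)
    push_cast
    field_simp [hB0 t, hS0 t]
  · -- second z-derivative
    intro z t
    have hlin : HasDerivAt (fun w : ℝ => Complex.I * (m : ℂ) * ((w : ℝ) : ℂ) * (b' t : ℂ) / (b t : ℂ))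
        (Complex.I * (m : ℂ) * (b' t : ℂ) / (b t : ℂ)) z := by
      have := (((hid z).const_mul (Complex.I * (m : ℂ))).mul_const ((b' t : ℂ))).div_const ((b t : ℂ))
      refine this.congr_deriv (Eq.symm ?_)
      ring
    have hG : HasDerivAt (fun w => φ' (w / b t) / (b t : ℂ)
        + φ (w / b t) * (Complex.I * (m : ℂ) * ((w : ℝ) : ℂ) * (b' t : ℂ) / (b t : ℂ)))
        (φ'' (z / b t) / ((b t : ℝ) : ℂ) / (b t : ℂ)
          + (φ' (z / b t) / ((b t : ℝ) : ℂ) *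
              (Complex.I * (m : ℂ) * (z : ℂ) * (b' t : ℂ) / (b t : ℂ))
            + φ (z / b t) * (Complex.I * (m : ℂ) * (b' t : ℂ) / (b t : ℂ)))) z :=
      ((hφ'z z t).div_const _).add ((hφz z t).mul hlin)
    have hAX : HasDerivAt (fun w => ((1 / Real.sqrt (b t) : ℝ) : ℂ) * X w t)
        (((1 / Real.sqrt (b t) : ℝ) : ℂ) *
          (X z t * (Complex.I * (m : ℂ) * (z : ℂ) * (b' t : ℂ) / (b t : ℂ)))) z :=
      (hXz z t).const_mul _
    have h := hAX.mul hG
    refine h.congr_deriv (Eq.symm ?_)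
    push_cast
    ring
  · -- the PDE
    intro z t
    beta_reduce
    have h1 := hφeq (z / b t)
    push_cast at h1
    have hP'' : φ'' (z / b t)
        = ((m : ℂ) ^ 2 * (ω₀ : ℂ) ^ 2 * ((z : ℂ) / (b t : ℂ)) ^ 2 - 2 * (m : ℂ) * (E : ℂ))
            * φ (z / b t) := by
      have h2 : -(1 / (2 * (m : ℂ))) * φ'' (z / b t) = ((E : ℂ)
          - (m : ℂ) * (ω₀ : ℂ) ^ 2 * ((z : ℂ) / (b t : ℂ)) ^ 2 / 2) * φ (z / b t) := by
        linear_combination h1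
      field_simp at h2
      linear_combination -h2
    have hb2 : (b'' t : ℝ) = ω₀ ^ 2 / (b t) ^ 3 - (ω t) ^ 2 * b t := by
      have := hbeq t; linarith
    have hB'' : ((b'' t : ℝ) : ℂ)
        = (ω₀ : ℂ) ^ 2 / ((b t : ℂ)) ^ 3 - ((ω t : ℝ) : ℂ) ^ 2 * (b t : ℂ) := by
      rw [hb2]; push_cast; ring
    have hAA : ((-(b' t) / (2 * b t * Real.sqrt (b t)) : ℝ) : ℂ)
        = ((1 / Real.sqrt (b t) : ℝ) : ℂ) * ((-(b' t) / (2 * b t) : ℝ) : ℂ) := by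
      rw [← Complex.ofReal_mul]
      congr 1
      field_simp
    rw [hAA]
    have hP2 : ((b t : ℝ) : ℂ) ^ 2 * φ'' (z / b t)
        = ((m : ℂ) ^ 2 * (ω₀ : ℂ) ^ 2 * (z : ℂ) ^ 2
            - 2 * (m : ℂ) * (E : ℂ) * ((b t : ℝ) : ℂ) ^ 2) * φ (z / b t) := by
      have h2 := hφeq (z / b t)
      push_cast at h2
      field_simp [hB0 t, hm0] at h2
      linear_combination (-1:ℂ) * h2
    have hr : b'' t * b t ^ 3 = ω₀ ^ 2 - ω t ^ 2 * b t ^ 4 := by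
      have h3 := hbeq t
      field_simp [hb0 t] at h3
      linear_combination h3
    have hB2 : ((b'' t : ℝ) : ℂ) * ((b t : ℝ) : ℂ) ^ 3
        = (ω₀ : ℂ) ^ 2 - ((ω t : ℝ) : ℂ) ^ 2 * ((b t : ℝ) : ℂ) ^ 4 := by
      have := congrArg (fun x : ℝ => (x : ℂ)) hr
      push_cast at this
      linear_combination this
    have hG' : Complex.I * (-((b' t : ℂ) * (b t : ℂ) * φ (z / b t))
          - 2 * (z : ℂ) * (b' t : ℂ) * φ' (z / b t)
          + φ (z / b t) * (Complex.I * (m : ℂ) * (z : ℂ) ^ 2 *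
              ((b'' t : ℂ) * (b t : ℂ) - (b' t : ℂ) ^ 2) - 2 * Complex.I * (E : ℂ)))
          * (m : ℂ) * (b t : ℂ) ^ 2
        = (-(φ'' (z / b t) + 2 * φ' (z / b t) * (Complex.I * (m : ℂ) * (z : ℂ) * (b' t : ℂ))
            + φ (z / b t) * (Complex.I * (m : ℂ) * (b' t : ℂ) * (b t : ℂ))
            + φ (z / b t) * (Complex.I * (m : ℂ) * (z : ℂ) * (b' t : ℂ)) ^ 2)
          + (m : ℂ) ^ 2 * ((ω t : ℝ) : ℂ) ^ 2 * (z : ℂ) ^ 2 * (b t : ℂ) ^ 2 * φ (z / b t))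
          * (b t : ℂ) ^ 2 := by
      linear_combination ((m : ℂ) ^ 2 * (z : ℂ) ^ 2 * ((b'' t : ℝ) : ℂ) * ((b t : ℝ) : ℂ) ^ 3
            * φ (z / b t)
          - 2 * (m : ℂ) * (E : ℂ) * φ (z / b t) * ((b t : ℝ) : ℂ) ^ 2) * Complex.I_sq
        + hP2 + (-((m : ℂ) ^ 2 * (z : ℂ) ^ 2 * φ (z / b t))) * hB2
    have hd : (2 * (m : ℂ) * ((b t : ℝ) : ℂ) ^ 4) ≠ 0 :=
      mul_ne_zero (mul_ne_zero two_ne_zero hm0) (pow_ne_zero 4 (hB0 t))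
    have hmain : Complex.I * (((-(b' t) / (2 * b t) : ℝ) : ℂ) * φ (z / b t)
        + ((-(z * b' t) / (b t) ^ 2 : ℝ) : ℂ) * φ' (z / b t)
        + φ (z / b t) * (Complex.I * (m : ℂ) * (z : ℂ) ^ 2 *
            ((b'' t : ℂ) * (b t : ℂ) - (b' t : ℂ) ^ 2) / (2 * (b t : ℂ) ^ 2)
          - Complex.I * (E : ℂ) / (b t : ℂ) ^ 2))
      = -(1 / (2 * (m : ℂ))) * (φ'' (z / b t) / (b t : ℂ) ^ 2
          + 2 * φ' (z / b t) * (Complex.I * (m : ℂ) * (z : ℂ) * (b' t : ℂ)) / (b t : ℂ) ^ 2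
          + φ (z / b t) * (Complex.I * (m : ℂ) * (b' t : ℂ) / (b t : ℂ))
          + φ (z / b t) * (Complex.I * (m : ℂ) * (z : ℂ) * (b' t : ℂ) / (b t : ℂ)) ^ 2)
        + ((m * (ω t) ^ 2 * z ^ 2 / 2 : ℝ) : ℂ) * φ (z / b t) := by
      have hS : φ'' (z / b t) / (b t : ℂ) ^ 2
          + 2 * φ' (z / b t) * (Complex.I * (m : ℂ) * (z : ℂ) * (b' t : ℂ)) / (b t : ℂ) ^ 2
          + φ (z / b t) * (Complex.I * (m : ℂ) * (b' t : ℂ) / (b t : ℂ))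
          + φ (z / b t) * (Complex.I * (m : ℂ) * (z : ℂ) * (b' t : ℂ) / (b t : ℂ)) ^ 2
          = (φ'' (z / b t) + 2 * φ' (z / b t) * (Complex.I * (m : ℂ) * (z : ℂ) * (b' t : ℂ))
            + φ (z / b t) * (Complex.I * (m : ℂ) * (b' t : ℂ) * (b t : ℂ))
            + φ (z / b t) * (Complex.I * (m : ℂ) * (z : ℂ) * (b' t : ℂ)) ^ 2) / (b t : ℂ) ^ 2 := by
        field_simp [hB0 t]
      rw [hS]
      apply mul_left_cancel₀ hd
      calc 2 * (m : ℂ) * ((b t : ℝ) : ℂ) ^ 4 *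
            (Complex.I * (((-(b' t) / (2 * b t) : ℝ) : ℂ) * φ (z / b t)
              + ((-(z * b' t) / (b t) ^ 2 : ℝ) : ℂ) * φ' (z / b t)
              + φ (z / b t) * (Complex.I * (m : ℂ) * (z : ℂ) ^ 2 *
                  ((b'' t : ℂ) * (b t : ℂ) - (b' t : ℂ) ^ 2) / (2 * (b t : ℂ) ^ 2)
                - Complex.I * (E : ℂ) / (b t : ℂ) ^ 2)))
          = Complex.I * (-((b' t : ℂ) * (b t : ℂ) * φ (z / b t))
              - 2 * (z : ℂ) * (b' t : ℂ) * φ' (z / b t)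
              + φ (z / b t) * (Complex.I * (m : ℂ) * (z : ℂ) ^ 2 *
                  ((b'' t : ℂ) * (b t : ℂ) - (b' t : ℂ) ^ 2) - 2 * Complex.I * (E : ℂ)))
              * (m : ℂ) * (b t : ℂ) ^ 2 := by
            push_cast
            field_simp [hB0 t]
            ring
        _ = (-(φ'' (z / b t) + 2 * φ' (z / b t) * (Complex.I * (m : ℂ) * (z : ℂ) * (b' t : ℂ))
              + φ (z / b t) * (Complex.I * (m : ℂ) * (b' t : ℂ) * (b t : ℂ))
              + φ (z / b t) * (Complex.I * (m : ℂ) * (z : ℂ) * (b' t : ℂ)) ^ 2)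
            + (m : ℂ) ^ 2 * ((ω t : ℝ) : ℂ) ^ 2 * (z : ℂ) ^ 2 * (b t : ℂ) ^ 2 * φ (z / b t))
            * (b t : ℂ) ^ 2 := hG'
        _ = 2 * (m : ℂ) * ((b t : ℝ) : ℂ) ^ 4 *
            (-(1 / (2 * (m : ℂ))) * ((φ'' (z / b t)
              + 2 * φ' (z / b t) * (Complex.I * (m : ℂ) * (z : ℂ) * (b' t : ℂ))
              + φ (z / b t) * (Complex.I * (m : ℂ) * (b' t : ℂ) * (b t : ℂ))
              + φ (z / b t) * (Complex.I * (m : ℂ) * (z : ℂ) * (b' t : ℂ)) ^ 2) / (b t : ℂ) ^ 2)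
            + ((m * (ω t) ^ 2 * z ^ 2 / 2 : ℝ) : ℂ) * φ (z / b t)) := by
            push_cast
            field_simp [hB0 t, hm0]
    linear_combination (((1 / Real.sqrt (b t) : ℝ) : ℂ) * X z t) * hmain
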